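/- Let G be the generalized dihedral group on a finite abelian group A with involution t, and let S ⊆ G be an inverse-closed generating set with |S| = 4 and |S ∩ At| = 3, say S = {s, t, t s₀, t s₁} with s, s₀, s₁ ∈ A and s an involution. Then Cay(G,S) does not admit a perfect code. -/

import Mathlib

def cayGraph {G : Type*} [Group G] (S : Set G) : SimpleGraph G :=
  SimpleGraph.fromRel (fun x y => y * x⁻¹ ∈ S)

def IsPerfectCode {V : Type*} (Γ : SimpleGraph V) (D : Set V) : Prop :=
  ∀ v : V, ∃! d, d ∈ D ∧ (d = v ∨ Γ.Adj d v)

theorem stmt_13 {G : Type*} [Group G] [Fintype G]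
    (A : Subgroup G) (hA : ∀ a ∈ A, ∀ b ∈ A, a * b = b * a)
    (t : G) (ht : t * t = 1) (htA : t ∉ A) (hidx : A.index = 2)
    (hconj : ∀ a ∈ A, t * a * t = a⁻¹)
    (s s₀ s₁ : G) (hs : s ∈ A) (hs₀ : s₀ ∈ A) (hs₁ : s₁ ∈ A)
    (hsinv : s * s = 1) (hsne : s ≠ 1)
    (S : Set G) (hS : S = {s, t, t * s₀, t * s₁}) (hScard : S.ncard = 4)
    (hSgen : Subgroup.closure S = ⊤) :
    ¬ ∃ D : Set G, IsPerfectCode (cayGraph S) D := by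
  classical
  subst hS
  rintro ⟨D, hD⟩
  -- basic identities
  have hs_inv : s⁻¹ = s := inv_eq_of_mul_eq_one_right hsinv
  have ht_inv : t⁻¹ = t := inv_eq_of_mul_eq_one_right ht
  have ht1 : t ≠ 1 := fun h => htA (h ▸ A.one_mem)
  have habs : ∀ x : G, x ∈ A → t = x → False := fun x hx e => htA (e ▸ hx)
  have hts : t * s * t = s := by rw [hconj s hs, hs_inv]
  have hst : s * t = t * s := by
    conv_lhs => rw [← hts]
    rw [mul_assoc, ht, mul_one]
  have hts₀ : t * s₀ * t = s₀⁻¹ := hconj s₀ hs₀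
  have hts₁ : t * s₁ * t = s₁⁻¹ := hconj s₁ hs₁
  have h₀t : s₀⁻¹ * t = t * s₀ := by
    rw [← hts₀, mul_assoc, mul_assoc, ht, mul_one]
  have h₁t : s₁⁻¹ * t = t * s₁ := by
    rw [← hts₁, mul_assoc, mul_assoc, ht, mul_one]
  -- shape lemmas
  have sh1 : ∀ g : G, s * (s * g) = g := by
    intro g; rw [← mul_assoc, hsinv, one_mul]
  have sh2 : ∀ g : G, s₀ * (s * g) = s * (s₀ * g) := by
    intro g; rw [← mul_assoc, hA s₀ hs₀ s hs, mul_assoc]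
  have sh3 : ∀ g : G, s₁ * (s * g) = s * (s₁ * g) := by
    intro g; rw [← mul_assoc, hA s₁ hs₁ s hs, mul_assoc]
  have sh4 : ∀ g : G, s * (t * g) = t * (s * g) := by
    intro g; rw [← mul_assoc, hst, mul_assoc]
  have sh5 : ∀ g : G, t * (t * g) = g := by
    intro g; rw [← mul_assoc, ht, one_mul]
  have sh6 : ∀ g : G, t * (s₀ * (t * g)) = s₀⁻¹ * g := by
    intro g; rw [← mul_assoc, ← mul_assoc, hts₀]
  have sh7 : ∀ g : G, t * (s₁ * (t * g)) = s₁⁻¹ * g := by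
    intro g; rw [← mul_assoc, ← mul_assoc, hts₁]
  have sh8 : ∀ g : G, s * (t * (s * g)) = t * g := by
    intro g; rw [sh4 (s*g), sh1]
  have sh9 : ∀ g : G, t * (t * (s * g)) = s * g := fun g => sh5 (s*g)
  have sh10 : ∀ g : G, t * (s₀ * (t * (s * g))) = s * (s₀⁻¹ * g) := by
    intro g; rw [sh6 (s*g), ← mul_assoc, hA s₀⁻¹ (A.inv_mem hs₀) s hs, mul_assoc]
  have sh11 : ∀ g : G, t * (s₁ * (t * (s * g))) = s * (s₁⁻¹ * g) := by
    intro g; rw [sh7 (s*g), ← mul_assoc, hA s₁⁻¹ (A.inv_mem hs₁) s hs, mul_assoc]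
  -- distinctness of s₀, s₁ from the cardinality of S
  have hcard3 : ∀ x y w : G, ({x, y, w} : Set G).ncard ≤ 3 := by
    intro x y w
    refine le_trans (Set.ncard_insert_le _ _) ?_
    have h2 : ({y, w} : Set G).ncard ≤ 2 := by
      refine le_trans (Set.ncard_insert_le _ _) ?_
      simp [Set.ncard_singleton]
    omega
  have hs₀1 : s₀ ≠ 1 := by
    intro h
    rw [h, mul_one] at hScard
    rw [Set.insert_idem] at hScard
    have := hcard3 s t (t * s₁)
    omega
  have hs₁1 : s₁ ≠ 1 := by
    intro h
    rw [h, mul_one] at hScard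
    rw [Set.pair_comm (t * s₀) t, Set.insert_idem] at hScard
    have := hcard3 s t (t * s₀)
    omega
  have hs01 : s₀ ≠ s₁ := by
    intro h
    rw [h, Set.pair_eq_singleton] at hScard
    have := hcard3 s t (t * s₁)
    omega
  -- adjacency characterization
  have hadj : ∀ d v : G, (cayGraph ({s, t, t * s₀, t * s₁} : Set G)).Adj d v ↔
      (d ≠ v ∧ (d = s * v ∨ d = t * v ∨ d = t * (s₀ * v) ∨ d = t * (s₁ * v))) := by
    intro d v
    show (SimpleGraph.fromRel _).Adj d v ↔ _
    rw [SimpleGraph.fromRel_adj]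
    constructor
    · rintro ⟨hne, h | h⟩
      · refine ⟨hne, ?_⟩
        have h' : v = s * d ∨ v = t * d ∨ v = (t * s₀) * d ∨ v = (t * s₁) * d := by
          rcases h with h | h | h | h
          · exact Or.inl (by rw [← h, inv_mul_cancel_right])
          · exact Or.inr (Or.inl (by rw [← h, inv_mul_cancel_right]))
          · exact Or.inr (Or.inr (Or.inl (by rw [← h, inv_mul_cancel_right])))
          · exact Or.inr (Or.inr (Or.inr (by rw [← h, inv_mul_cancel_right])))
        rcases h' with h' | h' | h' | h'
        · exact Or.inl (by rw [h', sh1])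
        · exact Or.inr (Or.inl (by rw [h', sh5]))
        · exact Or.inr (Or.inr (Or.inl (by
            rw [h', mul_assoc, sh6, inv_mul_cancel_left])))
        · exact Or.inr (Or.inr (Or.inr (by
            rw [h', mul_assoc, sh7, inv_mul_cancel_left])))
      · refine ⟨hne, ?_⟩
        rcases h with h | h | h | h
        · exact Or.inl (by rw [← h, inv_mul_cancel_right])
        · exact Or.inr (Or.inl (by rw [← h, inv_mul_cancel_right]))
        · exact Or.inr (Or.inr (Or.inl (by rw [← mul_assoc, ← h, inv_mul_cancel_right])))
        · exact Or.inr (Or.inr (Or.inr (by rw [← mul_assoc, ← h, inv_mul_cancel_right])))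
    · rintro ⟨hne, h⟩
      refine ⟨hne, Or.inr ?_⟩
      rcases h with h | h | h | h
      · rw [h, mul_inv_cancel_right]; exact Set.mem_insert _ _
      · rw [h, mul_inv_cancel_right]; right; exact Set.mem_insert _ _
      · rw [h, ← mul_assoc, mul_inv_cancel_right]; right; right; exact Set.mem_insert _ _
      · rw [h, ← mul_assoc, mul_inv_cancel_right]; right; right; right; rfl
  -- ball characterization
  have ball_iff : ∀ d v : G,
      (d = v ∨ (cayGraph ({s, t, t * s₀, t * s₁} : Set G)).Adj d v) ↔
      (d = v ∨ d = s * v ∨ d = t * v ∨ d = t * (s₀ * v) ∨ d = t * (s₁ * v)) := by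
    intro d v
    constructor
    · rintro (h | h)
      · exact Or.inl h
      · exact Or.inr ((hadj d v).mp h).2
    · rintro (h | h)
      · exact Or.inl h
      · by_cases hdv : d = v
        · exact Or.inl hdv
        · exact Or.inr ((hadj d v).mpr ⟨hdv, h⟩)
  have hD5 : ∀ v : G, ∃! d : G, d ∈ D ∧
      (d = v ∨ d = s * v ∨ d = t * v ∨ d = t * (s₀ * v) ∨ d = t * (s₁ * v)) := by
    intro v
    obtain ⟨d, ⟨h1, h2⟩, hu⟩ := hD v
    exact ⟨d, ⟨h1, (ball_iff d v).mp h2⟩,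
      fun y hy => hu y ⟨hy.1, (ball_iff y v).mpr hy.2⟩⟩
  have key : ∀ v d₁ d₂ : G, d₁ ∈ D → d₂ ∈ D →
      (d₁ = v ∨ d₁ = s * v ∨ d₁ = t * v ∨ d₁ = t * (s₀ * v) ∨ d₁ = t * (s₁ * v)) →
      (d₂ = v ∨ d₂ = s * v ∨ d₂ = t * v ∨ d₂ = t * (s₀ * v) ∨ d₂ = t * (s₁ * v)) →
      d₁ = d₂ := by
    intro v d₁ d₂ h1 h2 o1 o2
    obtain ⟨d, _, hu⟩ := hD5 v
    exact (hu d₁ ⟨h1, o1⟩).trans (hu d₂ ⟨h2, o2⟩).symm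
  have E1ex : ∀ v : G, v ∈ D ∨ s * v ∈ D ∨ t * v ∈ D ∨ t * (s₀ * v) ∈ D ∨ t * (s₁ * v) ∈ D := by
    intro v
    obtain ⟨d, ⟨hdD, h⟩, _⟩ := hD5 v
    rcases h with h | h | h | h | h
    · exact Or.inl (h ▸ hdD)
    · exact Or.inr (Or.inl (h ▸ hdD))
    · exact Or.inr (Or.inr (Or.inl (h ▸ hdD)))
    · exact Or.inr (Or.inr (Or.inr (Or.inl (h ▸ hdD))))
    · exact Or.inr (Or.inr (Or.inr (Or.inr (h ▸ hdD))))
  have E1'ex : ∀ g : G, s * g ∈ D ∨ g ∈ D ∨ t * (s * g) ∈ D ∨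
      t * (s * (s₀ * g)) ∈ D ∨ t * (s * (s₁ * g)) ∈ D := by
    intro g
    have h := E1ex (s * g)
    rw [sh1 g, sh2 g, sh3 g] at h
    exact h
  have E2ex : ∀ g : G, t * g ∈ D ∨ t * (s * g) ∈ D ∨ g ∈ D ∨
      s₀⁻¹ * g ∈ D ∨ s₁⁻¹ * g ∈ D := by
    intro g
    have h := E1ex (t * g)
    rw [sh4 g, sh5 g, sh6 g, sh7 g] at h
    exact h
  have E2'ex : ∀ g : G, t * (s * g) ∈ D ∨ t * g ∈ D ∨ s * g ∈ D ∨
      s * (s₀⁻¹ * g) ∈ D ∨ s * (s₁⁻¹ * g) ∈ D := by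
    intro g
    have h := E1ex (t * (s * g))
    rw [sh8 g, sh9 g, sh10 g, sh11 g] at h
    exact h
  -- helper contradictions
  have habs2 : ∀ w u : G, w ∈ A → u ∈ A → t * w = u → False := by
    intro w u hw hu h
    exact habs (u * w⁻¹) (A.mul_mem hu (A.inv_mem hw)) (by rw [← h, mul_inv_cancel_right])
  have u1 : ∀ h : G, h ∈ D → s * h ∈ D → False := by
    intro h h1 h2
    have e : h = s * h := key h _ _ h1 h2 (Or.inl rfl) (Or.inr (Or.inl rfl))
    exact hsne (right_eq_mul.mp e)
  have u2 : ∀ h : G, t * h ∈ D → t * (s * h) ∈ D → False := by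
    intro h h1 h2
    have e : t * h = t * (s * h) :=
      key (t * h) _ _ h1 h2 (Or.inl rfl) (Or.inr (Or.inl (sh4 h).symm))
    exact hsne (right_eq_mul.mp (mul_left_cancel e))
  have hVWd : ∀ h : G, (h ∈ D ∨ s * h ∈ D) → (t * h ∈ D ∨ t * (s * h) ∈ D) → False := by
    intro h hv hw
    rcases hv with hv | hv <;> rcases hw with hw | hw
    · have e : h = t * h :=
        key h _ _ hv hw (Or.inl rfl) (Or.inr (Or.inr (Or.inl rfl)))
      exact ht1 (right_eq_mul.mp e)
    · have e : h = t * (s * h) :=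
        key (s * h) _ _ hv hw (Or.inr (Or.inl (sh1 h).symm)) (Or.inr (Or.inr (Or.inl rfl)))
      rw [← mul_assoc] at e
      exact habs2 s 1 hs A.one_mem (right_eq_mul.mp e)
    · have e : s * h = t * h :=
        key h _ _ hv hw (Or.inr (Or.inl rfl)) (Or.inr (Or.inr (Or.inl rfl)))
      exact habs s hs (mul_right_cancel e).symm
    · have e : s * h = t * (s * h) :=
        key (s * h) _ _ hv hw (Or.inl rfl) (Or.inr (Or.inr (Or.inl rfl)))
      exact ht1 (right_eq_mul.mp e)
  -- W g → ¬ V (s₀⁻¹ g) etc.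
  have Lnv : ∀ g : G, (t * g ∈ D ∨ t * (s * g) ∈ D) →
      (s₀⁻¹ * g ∉ D ∧ s * (s₀⁻¹ * g) ∉ D) ∧ (s₁⁻¹ * g ∉ D ∧ s * (s₁⁻¹ * g) ∉ D) := by
    intro g hw
    rcases hw with hw | hw
    · refine ⟨⟨fun hx => ?_, fun hx => ?_⟩, fun hx => ?_, fun hx => ?_⟩
      · have e : t * g = s₀⁻¹ * g := key (t * g) _ _ hw hx (Or.inl rfl)
          (Or.inr (Or.inr (Or.inr (Or.inl (sh6 g).symm))))
        exact habs s₀⁻¹ (A.inv_mem hs₀) (mul_right_cancel e)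
      · have e : t * g = s * (s₀⁻¹ * g) := key (t * (s * g)) _ _ hw hx
          (Or.inr (Or.inl (sh8 g).symm))
          (Or.inr (Or.inr (Or.inr (Or.inl (sh10 g).symm))))
        rw [← mul_assoc] at e
        exact habs (s * s₀⁻¹) (A.mul_mem hs (A.inv_mem hs₀)) (mul_right_cancel e)
      · have e : t * g = s₁⁻¹ * g := key (t * g) _ _ hw hx (Or.inl rfl)
          (Or.inr (Or.inr (Or.inr (Or.inr (sh7 g).symm))))
        exact habs s₁⁻¹ (A.inv_mem hs₁) (mul_right_cancel e)
      · have e : t * g = s * (s₁⁻¹ * g) := key (t * (s * g)) _ _ hw hx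
          (Or.inr (Or.inl (sh8 g).symm))
          (Or.inr (Or.inr (Or.inr (Or.inr (sh11 g).symm))))
        rw [← mul_assoc] at e
        exact habs (s * s₁⁻¹) (A.mul_mem hs (A.inv_mem hs₁)) (mul_right_cancel e)
    · refine ⟨⟨fun hx => ?_, fun hx => ?_⟩, fun hx => ?_, fun hx => ?_⟩
      · have e : t * (s * g) = s₀⁻¹ * g := key (t * g) _ _ hw hx
          (Or.inr (Or.inl (sh4 g).symm))
          (Or.inr (Or.inr (Or.inr (Or.inl (sh6 g).symm))))
        rw [← mul_assoc] at e
        exact habs2 s s₀⁻¹ hs (A.inv_mem hs₀) (mul_right_cancel e)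
      · have e : t * (s * g) = s * (s₀⁻¹ * g) := key (t * (s * g)) _ _ hw hx
          (Or.inl rfl)
          (Or.inr (Or.inr (Or.inr (Or.inl (sh10 g).symm))))
        rw [← mul_assoc, ← mul_assoc] at e
        exact habs2 s (s * s₀⁻¹) hs (A.mul_mem hs (A.inv_mem hs₀)) (mul_right_cancel e)
      · have e : t * (s * g) = s₁⁻¹ * g := key (t * g) _ _ hw hx
          (Or.inr (Or.inl (sh4 g).symm))
          (Or.inr (Or.inr (Or.inr (Or.inr (sh7 g).symm))))
        rw [← mul_assoc] at e
        exact habs2 s s₁⁻¹ hs (A.inv_mem hs₁) (mul_right_cancel e)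
      · have e : t * (s * g) = s * (s₁⁻¹ * g) := key (t * (s * g)) _ _ hw hx
          (Or.inl rfl)
          (Or.inr (Or.inr (Or.inr (Or.inr (sh11 g).symm))))
        rw [← mul_assoc, ← mul_assoc] at e
        exact habs2 s (s * s₁⁻¹) hs (A.mul_mem hs (A.inv_mem hs₁)) (mul_right_cancel e)
  -- V g → ¬ W (s₀ g) etc.
  have sh2t : ∀ g : G, t * (s * (s₀ * g)) = t * (s₀ * (s * g)) := by
    intro g; rw [sh2 g]
  have sh3t : ∀ g : G, t * (s * (s₁ * g)) = t * (s₁ * (s * g)) := by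
    intro g; rw [sh3 g]
  have Lnw : ∀ g : G, (g ∈ D ∨ s * g ∈ D) →
      (t * (s₀ * g) ∉ D ∧ t * (s * (s₀ * g)) ∉ D) ∧
      (t * (s₁ * g) ∉ D ∧ t * (s * (s₁ * g)) ∉ D) := by
    intro g hv
    rcases hv with hv | hv
    · refine ⟨⟨fun hx => ?_, fun hx => ?_⟩, fun hx => ?_, fun hx => ?_⟩
      · have e : g = t * (s₀ * g) := key g _ _ hv hx (Or.inl rfl)
          (Or.inr (Or.inr (Or.inr (Or.inl rfl))))
        rw [← mul_assoc] at e
        exact habs2 s₀ 1 hs₀ A.one_mem (right_eq_mul.mp e)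
      · have e : g = t * (s * (s₀ * g)) := key (s * g) _ _ hv hx
          (Or.inr (Or.inl (sh1 g).symm))
          (Or.inr (Or.inr (Or.inr (Or.inl (sh2t g)))))
        rw [← mul_assoc, ← mul_assoc] at e
        have e2 := right_eq_mul.mp e
        rw [mul_assoc] at e2
        exact habs2 (s * s₀) 1 (A.mul_mem hs hs₀) A.one_mem e2
      · have e : g = t * (s₁ * g) := key g _ _ hv hx (Or.inl rfl)
          (Or.inr (Or.inr (Or.inr (Or.inr rfl))))
        rw [← mul_assoc] at e
        exact habs2 s₁ 1 hs₁ A.one_mem (right_eq_mul.mp e)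
      · have e : g = t * (s * (s₁ * g)) := key (s * g) _ _ hv hx
          (Or.inr (Or.inl (sh1 g).symm))
          (Or.inr (Or.inr (Or.inr (Or.inr (sh3t g)))))
        rw [← mul_assoc, ← mul_assoc] at e
        have e2 := right_eq_mul.mp e
        rw [mul_assoc] at e2
        exact habs2 (s * s₁) 1 (A.mul_mem hs hs₁) A.one_mem e2
    · refine ⟨⟨fun hx => ?_, fun hx => ?_⟩, fun hx => ?_, fun hx => ?_⟩
      · have e : s * g = t * (s₀ * g) := key g _ _ hv hx (Or.inr (Or.inl rfl))
          (Or.inr (Or.inr (Or.inr (Or.inl rfl))))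
        rw [← mul_assoc] at e
        exact habs2 s₀ s hs₀ hs (mul_right_cancel e).symm
      · have e : s * g = t * (s * (s₀ * g)) := key (s * g) _ _ hv hx
          (Or.inl rfl)
          (Or.inr (Or.inr (Or.inr (Or.inl (sh2t g)))))
        rw [← mul_assoc, ← mul_assoc] at e
        have e2 := (mul_right_cancel e).symm
        rw [mul_assoc] at e2
        exact habs2 (s * s₀) s (A.mul_mem hs hs₀) hs e2
      · have e : s * g = t * (s₁ * g) := key g _ _ hv hx (Or.inr (Or.inl rfl))
          (Or.inr (Or.inr (Or.inr (Or.inr rfl))))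
        rw [← mul_assoc] at e
        exact habs2 s₁ s hs₁ hs (mul_right_cancel e).symm
      · have e : s * g = t * (s * (s₁ * g)) := key (s * g) _ _ hv hx
          (Or.inl rfl)
          (Or.inr (Or.inr (Or.inr (Or.inr (sh3t g)))))
        rw [← mul_assoc, ← mul_assoc] at e
        have e2 := (mul_right_cancel e).symm
        rw [mul_assoc] at e2
        exact habs2 (s * s₁) s (A.mul_mem hs hs₁) hs e2
  -- Z g → W (s₀ g) ∧ W (s₁ g) and V (s₀⁻¹ g) ∧ V (s₁⁻¹ g)
  have LZaW : ∀ g : G, g ∉ D → s * g ∉ D → t * g ∉ D → t * (s * g) ∉ D →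
      (t * (s₀ * g) ∈ D ∨ t * (s * (s₀ * g)) ∈ D) ∧
      (t * (s₁ * g) ∈ D ∨ t * (s * (s₁ * g)) ∈ D) := by
    intro g hg1 hg2 hg3 hg4
    have hp : t * (s₀ * g) ∈ D ∨ t * (s₁ * g) ∈ D := by
      rcases E1ex g with h | h | h | h | h
      · exact absurd h hg1
      · exact absurd h hg2
      · exact absurd h hg3
      · exact Or.inl h
      · exact Or.inr h
    have hq : t * (s * (s₀ * g)) ∈ D ∨ t * (s * (s₁ * g)) ∈ D := by
      rcases E1'ex g with h | h | h | h | h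
      · exact absurd h hg2
      · exact absurd h hg1
      · exact absurd h hg4
      · exact Or.inl h
      · exact Or.inr h
    rcases hp with hp | hp <;> rcases hq with hq | hq
    · exact (u2 (s₀ * g) hp hq).elim
    · exact ⟨Or.inl hp, Or.inr hq⟩
    · exact ⟨Or.inr hq, Or.inl hp⟩
    · exact (u2 (s₁ * g) hp hq).elim
  have LZaV : ∀ g : G, g ∉ D → s * g ∉ D → t * g ∉ D → t * (s * g) ∉ D →
      (s₀⁻¹ * g ∈ D ∨ s * (s₀⁻¹ * g) ∈ D) ∧
      (s₁⁻¹ * g ∈ D ∨ s * (s₁⁻¹ * g) ∈ D) := by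
    intro g hg1 hg2 hg3 hg4
    have hp : s₀⁻¹ * g ∈ D ∨ s₁⁻¹ * g ∈ D := by
      rcases E2ex g with h | h | h | h | h
      · exact absurd h hg3
      · exact absurd h hg4
      · exact absurd h hg1
      · exact Or.inl h
      · exact Or.inr h
    have hq : s * (s₀⁻¹ * g) ∈ D ∨ s * (s₁⁻¹ * g) ∈ D := by
      rcases E2'ex g with h | h | h | h | h
      · exact absurd h hg4
      · exact absurd h hg3
      · exact absurd h hg2
      · exact Or.inl h
      · exact Or.inr h
    rcases hp with hp | hp <;> rcases hq with hq | hq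
    · exact (u1 (s₀⁻¹ * g) hp hq).elim
    · exact ⟨Or.inl hp, Or.inr hq⟩
    · exact ⟨Or.inr hq, Or.inl hp⟩
    · exact (u1 (s₁⁻¹ * g) hp hq).elim
  -- W g → W (s₀ g) ∨ W (s₁ g)
  have Cge : ∀ g : G, (t * g ∈ D ∨ t * (s * g) ∈ D) →
      ((t * (s₀ * g) ∈ D ∨ t * (s * (s₀ * g)) ∈ D) ∨
       (t * (s₁ * g) ∈ D ∨ t * (s * (s₁ * g)) ∈ D)) := by
    intro g hw
    rcases hw with hw | hw
    · rcases E1'ex g with h | h | h | h | h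
      · exact ((hVWd g (Or.inr h) (Or.inl hw)).elim)
      · exact ((hVWd g (Or.inl h) (Or.inl hw)).elim)
      · exact ((u2 g hw h).elim)
      · exact Or.inl (Or.inr h)
      · exact Or.inr (Or.inr h)
    · rcases E1ex g with h | h | h | h | h
      · exact ((hVWd g (Or.inl h) (Or.inr hw)).elim)
      · exact ((hVWd g (Or.inr h) (Or.inr hw)).elim)
      · exact ((u2 g h hw).elim)
      · exact Or.inl (Or.inl h)
      · exact Or.inr (Or.inl h)
  -- pigeonhole on V's
  have Bx : ∀ g : G, (g ∈ D ∨ s * g ∈ D) → (s₀⁻¹ * g ∈ D ∨ s * (s₀⁻¹ * g) ∈ D) →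
      (s₁⁻¹ * g ∈ D ∨ s * (s₁⁻¹ * g) ∈ D) → False := by
    intro g hv h0 h1
    have xp01 : g ∈ D → s₀⁻¹ * g ∈ D → False := by
      intro a b
      have e : g = s₀⁻¹ * g := key (t * g) _ _ a b
        (Or.inr (Or.inr (Or.inl (sh5 g).symm)))
        (Or.inr (Or.inr (Or.inr (Or.inl (sh6 g).symm))))
      exact hs₀1 (inv_eq_one.mp (right_eq_mul.mp e))
    have xp02 : g ∈ D → s₁⁻¹ * g ∈ D → False := by
      intro a b
      have e : g = s₁⁻¹ * g := key (t * g) _ _ a b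
        (Or.inr (Or.inr (Or.inl (sh5 g).symm)))
        (Or.inr (Or.inr (Or.inr (Or.inr (sh7 g).symm))))
      exact hs₁1 (inv_eq_one.mp (right_eq_mul.mp e))
    have xp12 : s₀⁻¹ * g ∈ D → s₁⁻¹ * g ∈ D → False := by
      intro a b
      have e : s₀⁻¹ * g = s₁⁻¹ * g := key (t * g) _ _ a b
        (Or.inr (Or.inr (Or.inr (Or.inl (sh6 g).symm))))
        (Or.inr (Or.inr (Or.inr (Or.inr (sh7 g).symm))))
      exact hs01 (inv_injective (mul_right_cancel e))
    have xs01 : s * g ∈ D → s * (s₀⁻¹ * g) ∈ D → False := by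
      intro a b
      have e : s * g = s * (s₀⁻¹ * g) := key (t * (s * g)) _ _ a b
        (Or.inr (Or.inr (Or.inl (sh9 g).symm)))
        (Or.inr (Or.inr (Or.inr (Or.inl (sh10 g).symm))))
      exact hs₀1 (inv_eq_one.mp (right_eq_mul.mp (mul_left_cancel e)))
    have xs02 : s * g ∈ D → s * (s₁⁻¹ * g) ∈ D → False := by
      intro a b
      have e : s * g = s * (s₁⁻¹ * g) := key (t * (s * g)) _ _ a b
        (Or.inr (Or.inr (Or.inl (sh9 g).symm)))
        (Or.inr (Or.inr (Or.inr (Or.inr (sh11 g).symm))))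
      exact hs₁1 (inv_eq_one.mp (right_eq_mul.mp (mul_left_cancel e)))
    have xs12 : s * (s₀⁻¹ * g) ∈ D → s * (s₁⁻¹ * g) ∈ D → False := by
      intro a b
      have e : s * (s₀⁻¹ * g) = s * (s₁⁻¹ * g) := key (t * (s * g)) _ _ a b
        (Or.inr (Or.inr (Or.inr (Or.inl (sh10 g).symm))))
        (Or.inr (Or.inr (Or.inr (Or.inr (sh11 g).symm))))
      exact hs01 (inv_injective (mul_right_cancel (mul_left_cancel e)))
    rcases hv with hv | hv <;> rcases h0 with h0 | h0 <;> rcases h1 with h1 | h1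
    · exact xp01 hv h0
    · exact xp01 hv h0
    · exact xp02 hv h1
    · exact xs12 h0 h1
    · exact xp12 h0 h1
    · exact xs02 hv h1
    · exact xs01 hv h0
    · exact xs01 hv h0
  -- pigeonhole on W's
  have Wx : ∀ g : G, (t * g ∈ D ∨ t * (s * g) ∈ D) →
      (t * (s₀ * g) ∈ D ∨ t * (s * (s₀ * g)) ∈ D) →
      (t * (s₁ * g) ∈ D ∨ t * (s * (s₁ * g)) ∈ D) → False := by
    intro g hv h0 h1
    have yp01 : t * g ∈ D → t * (s₀ * g) ∈ D → False := by
      intro a b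
      have e : t * g = t * (s₀ * g) := key g _ _ a b
        (Or.inr (Or.inr (Or.inl rfl)))
        (Or.inr (Or.inr (Or.inr (Or.inl rfl))))
      exact hs₀1 (right_eq_mul.mp (mul_left_cancel e))
    have yp02 : t * g ∈ D → t * (s₁ * g) ∈ D → False := by
      intro a b
      have e : t * g = t * (s₁ * g) := key g _ _ a b
        (Or.inr (Or.inr (Or.inl rfl)))
        (Or.inr (Or.inr (Or.inr (Or.inr rfl))))
      exact hs₁1 (right_eq_mul.mp (mul_left_cancel e))
    have yp12 : t * (s₀ * g) ∈ D → t * (s₁ * g) ∈ D → False := by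
      intro a b
      have e : t * (s₀ * g) = t * (s₁ * g) := key g _ _ a b
        (Or.inr (Or.inr (Or.inr (Or.inl rfl))))
        (Or.inr (Or.inr (Or.inr (Or.inr rfl))))
      exact hs01 (mul_right_cancel (mul_left_cancel e))
    have ys01 : t * (s * g) ∈ D → t * (s * (s₀ * g)) ∈ D → False := by
      intro a b
      have e : t * (s * g) = t * (s * (s₀ * g)) := key (s * g) _ _ a b
        (Or.inr (Or.inr (Or.inl rfl)))
        (Or.inr (Or.inr (Or.inr (Or.inl (sh2t g)))))
      exact hs₀1 (right_eq_mul.mp (mul_left_cancel (mul_left_cancel e)))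
    have ys02 : t * (s * g) ∈ D → t * (s * (s₁ * g)) ∈ D → False := by
      intro a b
      have e : t * (s * g) = t * (s * (s₁ * g)) := key (s * g) _ _ a b
        (Or.inr (Or.inr (Or.inl rfl)))
        (Or.inr (Or.inr (Or.inr (Or.inr (sh3t g)))))
      exact hs₁1 (right_eq_mul.mp (mul_left_cancel (mul_left_cancel e)))
    have ys12 : t * (s * (s₀ * g)) ∈ D → t * (s * (s₁ * g)) ∈ D → False := by
      intro a b
      have e : t * (s * (s₀ * g)) = t * (s * (s₁ * g)) := key (s * g) _ _ a b
        (Or.inr (Or.inr (Or.inr (Or.inl (sh2t g)))))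
        (Or.inr (Or.inr (Or.inr (Or.inr (sh3t g)))))
      exact hs01 (mul_right_cancel (mul_left_cancel (mul_left_cancel e)))
    rcases hv with hv | hv <;> rcases h0 with h0 | h0 <;> rcases h1 with h1 | h1
    · exact yp01 hv h0
    · exact yp01 hv h0
    · exact yp02 hv h1
    · exact ys12 h0 h1
    · exact yp12 h0 h1
    · exact ys02 hv h1
    · exact ys01 hv h0
    · exact ys01 hv h0
  -- commuting helpers
  have ecomm : ∀ x : G, s₁ * (s₀⁻¹ * x) = s₀⁻¹ * (s₁ * x) := by
    intro x; rw [← mul_assoc, hA s₁ hs₁ s₀⁻¹ (A.inv_mem hs₀), mul_assoc]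
  have ecomm' : ∀ x : G, s₁⁻¹ * (s₀⁻¹ * x) = s₀⁻¹ * (s₁⁻¹ * x) := by
    intro x; rw [← mul_assoc, hA s₁⁻¹ (A.inv_mem hs₁) s₀⁻¹ (A.inv_mem hs₀), mul_assoc]
  by_cases hZ : ∃ g : G, g ∉ D ∧ s * g ∉ D ∧ t * g ∉ D ∧ t * (s * g) ∉ D
  · -- Case 1 : chase
    obtain ⟨z, hz1, hz2, hz3, hz4⟩ := hZ
    obtain ⟨hV0, hV1⟩ := LZaV z hz1 hz2 hz3 hz4
    obtain ⟨hW0, hW1⟩ := LZaW z hz1 hz2 hz3 hz4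
    have eq2 : s₁ * (s₀⁻¹ * (s₁⁻¹ * z)) = s₀⁻¹ * z := by
      rw [ecomm (s₁⁻¹ * z), mul_inv_cancel_left]
    have eq6 : s₁ * (s₀⁻¹ * (s₀⁻¹ * z)) = s₀⁻¹ * (s₀⁻¹ * (s₁ * z)) := by
      rw [ecomm (s₀⁻¹ * z), ecomm z]
    have hWp : ¬ (t * (s₀⁻¹ * (s₁⁻¹ * z)) ∈ D ∨ t * (s * (s₀⁻¹ * (s₁⁻¹ * z))) ∈ D) := by
      intro hw
      rcases Cge _ hw with h | h
      · rw [mul_inv_cancel_left] at h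
        exact hVWd _ hV1 h
      · rw [eq2] at h
        exact hVWd _ hV0 h
    have hVp : s₀⁻¹ * (s₁⁻¹ * z) ∈ D ∨ s * (s₀⁻¹ * (s₁⁻¹ * z)) ∈ D := by
      by_contra hc
      push_neg at hc
      have h4 := not_or.mp hWp
      have h5 := (LZaW _ hc.1 hc.2 h4.1 h4.2).1
      rw [mul_inv_cancel_left] at h5
      exact hVWd _ hV1 h5
    have hnVq : ¬ (s₀⁻¹ * (s₀⁻¹ * z) ∈ D ∨ s * (s₀⁻¹ * (s₀⁻¹ * z)) ∈ D) := by
      intro hq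
      refine Bx (s₀⁻¹ * z) hV0 hq ?_
      rw [ecomm' z]
      exact hVp
    have hWq : t * (s₀⁻¹ * (s₀⁻¹ * z)) ∈ D ∨ t * (s * (s₀⁻¹ * (s₀⁻¹ * z))) ∈ D := by
      by_contra hc
      push_neg at hc
      have hnv := not_or.mp hnVq
      have h5 := (LZaW _ hnv.1 hnv.2 hc.1 hc.2).1
      rw [mul_inv_cancel_left] at h5
      exact hVWd _ hV0 h5
    have hWr : t * (s₁ * (s₀⁻¹ * (s₀⁻¹ * z))) ∈ D ∨
        t * (s * (s₁ * (s₀⁻¹ * (s₀⁻¹ * z)))) ∈ D := by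
      rcases Cge _ hWq with h | h
      · rw [mul_inv_cancel_left] at h
        exact (hVWd _ hV0 h).elim
      · exact h
    have hnVx := (Lnv (s₁ * z) hW1).1
    have hnWx := (Lnw (s₀⁻¹ * z) hV0).2
    rw [ecomm z] at hnWx
    have hfin := (LZaV _ hnVx.1 hnVx.2 hnWx.1 hnWx.2).1
    rw [← eq6] at hfin
    exact hVWd _ hfin hWr
  · -- Case 2 : no Z element
    push_neg at hZ
    have hVWall : ∀ g : G, (g ∈ D ∨ s * g ∈ D) ∨ (t * g ∈ D ∨ t * (s * g) ∈ D) := by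
      intro g
      by_cases a : g ∈ D
      · exact Or.inl (Or.inl a)
      · by_cases b : s * g ∈ D
        · exact Or.inl (Or.inr b)
        · by_cases c : t * g ∈ D
          · exact Or.inr (Or.inl c)
          · exact Or.inr (Or.inr (hZ g a b c))
    set WF : Finset G := Finset.univ.filter (fun g => t * g ∈ D ∨ t * (s * g) ∈ D)
      with hWF
    have memWF : ∀ g : G, g ∈ WF ↔ (t * g ∈ D ∨ t * (s * g) ∈ D) := by
      intro g; simp [hWF]
    have hmap : ∀ c : G,
        (∀ g : G, (t * g ∈ D ∨ t * (s * g) ∈ D) →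
          (t * (c * g) ∈ D ∨ t * (s * (c * g)) ∈ D)) →
        ∀ v : G, (t * (c * v) ∈ D ∨ t * (s * (c * v)) ∈ D) →
          (t * v ∈ D ∨ t * (s * v) ∈ D) := by
      intro c hcl v hcv
      have hsub : WF.image (fun g => c * g) ⊆ WF := by
        intro x hx
        obtain ⟨w, hw, rfl⟩ := Finset.mem_image.mp hx
        exact (memWF _).mpr (hcl w ((memWF _).mp hw))
      have hcard : (WF.image (fun g => c * g)).card = WF.card :=
        Finset.card_image_of_injective _ (mul_right_injective c)
      have heq : WF.image (fun g => c * g) = WF :=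
        Finset.eq_of_subset_of_card_le hsub (le_of_eq hcard.symm)
      have hmem : c * v ∈ WF := (memWF _).mpr hcv
      rw [← heq] at hmem
      obtain ⟨w, hw, hwe⟩ := Finset.mem_image.mp hmem
      have hwv : w = v := mul_left_cancel hwe
      exact (memWF _).mp (hwv ▸ hw)
    have hcl₀ : ∀ g : G, (t * g ∈ D ∨ t * (s * g) ∈ D) →
        (t * (s₀⁻¹ * g) ∈ D ∨ t * (s * (s₀⁻¹ * g)) ∈ D) := by
      intro g hw
      rcases hVWall (s₀⁻¹ * g) with hv | hw2
      · obtain ⟨⟨a1, a2⟩, _⟩ := Lnv g hw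
        rcases hv with hv | hv
        · exact absurd hv a1
        · exact absurd hv a2
      · exact hw2
    have hcl₁ : ∀ g : G, (t * g ∈ D ∨ t * (s * g) ∈ D) →
        (t * (s₁⁻¹ * g) ∈ D ∨ t * (s * (s₁⁻¹ * g)) ∈ D) := by
      intro g hw
      rcases hVWall (s₁⁻¹ * g) with hv | hw2
      · obtain ⟨_, a1, a2⟩ := Lnv g hw
        rcases hv with hv | hv
        · exact absurd hv a1
        · exact absurd hv a2
      · exact hw2
    by_cases hVex : ∃ v : G, v ∈ D ∨ s * v ∈ D
    · obtain ⟨v, hv⟩ := hVex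
      have hv₀ : s₀⁻¹ * v ∈ D ∨ s * (s₀⁻¹ * v) ∈ D := by
        rcases hVWall (s₀⁻¹ * v) with h | h
        · exact h
        · exact (hVWd v hv (hmap s₀⁻¹ hcl₀ v h)).elim
      have hv₁ : s₁⁻¹ * v ∈ D ∨ s * (s₁⁻¹ * v) ∈ D := by
        rcases hVWall (s₁⁻¹ * v) with h | h
        · exact h
        · exact (hVWd v hv (hmap s₁⁻¹ hcl₁ v h)).elim
      exact Bx v hv hv₀ hv₁
    · push_neg at hVex
      have hallW : ∀ v : G, t * v ∈ D ∨ t * (s * v) ∈ D := by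
        intro v
        rcases hVWall v with h | h
        · rcases h with h | h
          · exact absurd h (hVex v).1
          · exact absurd h (hVex v).2
        · exact h
      exact Wx 1 (hallW 1) (hallW (s₀ * 1)) (hallW (s₁ * 1))
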